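/- Let k ≥ 2 be an integer and φ a k-CNF formula on variables x₁,...,x_n. Let G be the perfect matching on the 2n literal vertices with edges {x_i, x̄_i}. For each clause (y₁ ∨ ⋯ ∨ y_k), add to F the (k−1)-tuple ({y₁, ȳ₂}, {y₁, ȳ₃}, ..., {y₁, ȳ_k}) of 2-subsets of vertices (where ȳ denotes the complementary literal vertex). Identify truth assignments with proper 2-colorings of G. Then an assignment NAE-satisfies a clause (y₁ ∨ ⋯ ∨ y_k) if and only if the associated (k−1)-tuple is not uniformly rainbow with respect to the corresponding 2-coloring; hence φ is NAE-satisfiable iff there is a proper 2-coloring of G with no uniformly rainbow tuple in F. -/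
import Mathlib


/-- The truth value of a literal `(i, b)` (`b = true` means `xᵢ`, `b = false` means
`¬xᵢ`) under an assignment `a`. -/
def litVal {n : ℕ} (a : Fin n → Bool) (lit : Fin n × Bool) : Bool :=
  if lit.2 then a lit.1 else !(a lit.1)

/-- With the `(k−1)`-tuple `({y₁,ȳ₂},…,{y₁,ȳ_k})` attached to each clause: an
assignment NAE-satisfies a clause iff the tuple is not uniformly rainbow under the
corresponding 2-coloring (each pair being rainbow means `c y₁ ≠ c ȳⱼ`); hence `φ` is
NAE-satisfiable iff some proper 2-coloring of the matching has no uniformly rainbow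
tuple. -/
theorem stmt16 (k n : ℕ) (hk : 2 ≤ k) (φ : Set (Fin k → Fin n × Bool))
    (hφ : ∀ cl ∈ φ, Function.Injective fun s => (cl s).1) :
    (∀ a : Fin n → Bool, ∀ cl ∈ φ,
      (((∃ s, litVal a (cl s) = true) ∧ (∃ s, litVal a (cl s) = false)) ↔
        ¬ ∀ j : Fin (k - 1),
          (fun lit => if litVal a lit then (0 : Fin 2) else 1) (cl ⟨0, by omega⟩) ≠
          (fun lit => if litVal a lit then (0 : Fin 2) else 1)
            ((cl ⟨j.1 + 1, by have := j.isLt; omega⟩).1,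
              !(cl ⟨j.1 + 1, by have := j.isLt; omega⟩).2))) ∧
    ((∃ a : Fin n → Bool, ∀ cl ∈ φ,
        (∃ s, litVal a (cl s) = true) ∧ (∃ s, litVal a (cl s) = false)) ↔
      (∃ c : Fin n × Bool → Fin 2, (∀ i : Fin n, c (i, true) ≠ c (i, false)) ∧
        ∀ cl ∈ φ, ¬ ∀ j : Fin (k - 1),
          c (cl ⟨0, by omega⟩) ≠
          c ((cl ⟨j.1 + 1, by have := j.isLt; omega⟩).1,
              !(cl ⟨j.1 + 1, by have := j.isLt; omega⟩).2))) := by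
  have hneg : ∀ (a : Fin n → Bool) (p : Fin n × Bool),
      litVal a (p.1, !p.2) = !litVal a p := by
    intro a p; cases hb : p.2 <;> simp [litVal, hb]
  have hiff : ∀ x y : Bool,
      ((if x then (0 : Fin 2) else 1) ≠ (if !y then (0 : Fin 2) else 1)) ↔ x = y := by
    decide
  have key : ∀ (a : Fin n → Bool), ∀ cl ∈ φ,
      (((∃ s, litVal a (cl s) = true) ∧ (∃ s, litVal a (cl s) = false)) ↔
        ¬ ∀ j : Fin (k - 1),
          (fun lit => if litVal a lit then (0 : Fin 2) else 1) (cl ⟨0, by omega⟩) ≠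
          (fun lit => if litVal a lit then (0 : Fin 2) else 1)
            ((cl ⟨j.1 + 1, by have := j.isLt; omega⟩).1,
              !(cl ⟨j.1 + 1, by have := j.isLt; omega⟩).2)) := by
    intro a cl _
    simp only [hneg, hiff]
    constructor
    · rintro ⟨⟨s, hs⟩, ⟨t, ht⟩⟩ hall
      have hall' : ∀ u : Fin k, litVal a (cl u) = litVal a (cl ⟨0, by omega⟩) := by
        intro u
        rcases Nat.eq_zero_or_pos u.1 with h0 | hp
        · congr 1; exact congrArg cl (Fin.ext h0)
        · have hm : u.1 - 1 < k - 1 := by have := u.isLt; omega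
          have := hall ⟨u.1 - 1, hm⟩
          have hu : cl u = cl ⟨u.1 - 1 + 1, by have := u.isLt; omega⟩ :=
            congrArg cl (Fin.ext (by simp; omega))
          rw [hu]; exact this.symm
      rw [hall' s] at hs; rw [hall' t] at ht
      rw [hs] at ht; exact Bool.noConfusion ht
    · intro h
      push_neg at h
      obtain ⟨j, hj⟩ := h
      by_cases h0 : litVal a (cl ⟨0, by omega⟩) = true
      · refine ⟨⟨_, h0⟩, ⟨⟨j.1 + 1, by have := j.isLt; omega⟩, ?_⟩⟩
        rw [h0] at hj
        simpa using (Ne.symm hj)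
      · have h0' : litVal a (cl ⟨0, by omega⟩) = false := by
          simpa using h0
        refine ⟨⟨⟨j.1 + 1, by have := j.isLt; omega⟩, ?_⟩, ⟨_, h0'⟩⟩
        rw [h0'] at hj
        simpa using (Ne.symm hj)
  refine ⟨key, ?_, ?_⟩
  · rintro ⟨a, ha⟩
    refine ⟨fun lit => if litVal a lit then 0 else 1, ?_, ?_⟩
    · intro i; cases h : a i <;> simp [litVal, h]
    · intro cl hcl
      exact (key a cl hcl).mp (ha cl hcl)
  · rintro ⟨c, hc, hcl⟩
    refine ⟨fun i => decide (c (i, true) = 0), fun cl hclφ => ?_⟩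
    have h2 : ∀ x : Fin 2, x = 0 ∨ x = 1 := by decide
    have heq : ∀ p : Fin n × Bool,
        c p = if litVal (fun i => decide (c (i, true) = 0)) p then 0 else 1 := by
      rintro ⟨i, b⟩
      cases b
      · rcases h2 (c (i, true)) with h | h <;> rcases h2 (c (i, false)) with h' | h' <;>
          first
          | (exfalso; exact hc i (h.trans h'.symm))
          | simp [litVal, h, h']
      · rcases h2 (c (i, true)) with h | h <;> simp [litVal, h]
    refine (key _ cl hclφ).mpr ?_
    intro hall
    refine hcl cl hclφ (fun j => ?_)
    have h' := hall j
    simp only [] at h'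
    rw [heq, heq]
    exact h'
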